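/- arXiv:2212.09470 — 2 statements merged into one kernel-verified Lean document; each statement's English description precedes it below -/
import Mathlib

section
/- For integers a, b, c with b ≠ 0 (and all signs b_{j} ∈ {1,-1}), the product of three continued-fraction layer matrices (0 b1; 1 a)·(0 b2; 1 0)·(0 b3; 1 c) acts as a Möbius transformation identically to the single layer matrix (0 b1·b2·b3; 1 c + b2·b3·a); i.e., the two matrices are equal up to a nonzero scalar multiple. -/
open Matrix

theorem stmt_1 (a c : ℤ) (b₁ b₂ b₃ : ℤ)
    (hb₁ : b₁ = 1 ∨ b₁ = -1) (hb₂ : b₂ = 1 ∨ b₂ = -1) (hb₃ : b₃ = 1 ∨ b₃ = -1) :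
    ∃ k : ℤ, k ≠ 0 ∧
      (!![0, b₁; 1, a] : Matrix (Fin 2) (Fin 2) ℤ) * !![0, b₂; 1, 0] * !![0, b₃; 1, c] =
        k • !![0, b₁ * b₂ * b₃; 1, c + b₂ * b₃ * a] := by
  refine ⟨b₂, by rcases hb₂ with h | h <;> simp [h], ?_⟩
  rcases hb₂ with h | h <;> subst h <;>
    ext i j <;> fin_cases i <;> fin_cases j <;>
    simp [Matrix.mul_apply, Fin.sum_univ_succ] <;> ring
end

section
/- If a 2×2 real matrix M has a pair of non-real complex conjugate eigenvalues λ, λ̄ with λ not real and λ/|λ| not a root of unity equal to 1 (i.e., the rotation angle θ ≠ 0 mod 2π), then the sequence of Möbius iterates M^k(0) does not converge in ℝ, unless it is eventually constant rational. -/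
open Matrix Filter

private lemma sol_rec (t d : ℝ) (lam : ℂ) (hl : lam ^ 2 = (t : ℂ) * lam - (d : ℂ))
    (x : ℕ → ℝ) (hx : ∀ k, x (k + 2) = t * x (k + 1) - d * x k)
    (X : ℂ) (h0 : X.re = x 0) (h1 : (X * lam).re = x 1) :
    ∀ k, x k = (X * lam ^ k).re := by
  have key : ∀ k, x k = (X * lam ^ k).re ∧ x (k + 1) = (X * lam ^ (k + 1)).re := by
    intro k
    induction k with
    | zero =>
      constructor
      · simpa using h0.symm
      · simpa using h1.symm
    | succ n ih =>
      refine ⟨ih.2, ?_⟩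
      have hpow : X * lam ^ (n + 2) = (t : ℂ) * (X * lam ^ (n + 1)) - (d : ℂ) * (X * lam ^ n) := by
        linear_combination (X * lam ^ n) * hl
      rw [hx n, ih.1, ih.2, hpow]
      simp [Complex.sub_re, Complex.re_ofReal_mul]
  exact fun k => (key k).1

private lemma re_zero_mul (z w : ℂ) (hz : z ≠ 0) (h1 : z.re = 0) (h2 : (z * w).re = 0) :
    w.im = 0 := by
  rw [Complex.mul_re, h1] at h2
  simp only [zero_mul, zero_sub, neg_eq_zero] at h2
  rcases mul_eq_zero.mp h2 with h | h
  · exact absurd (Complex.ext h1 h) hz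
  · exact h

theorem stmt_10 (M : Matrix (Fin 2) (Fin 2) ℝ) (lam : ℂ)
    (hroot : lam ^ 2 - (M.trace : ℂ) * lam + (M.det : ℂ) = 0)
    (him : lam.im ≠ 0) :
    ∀ L : ℝ,
      Tendsto (fun k : ℕ => ((M ^ k) 0 1) / ((M ^ k) 1 1)) atTop (nhds L) →
        ∃ r : ℚ, L = (r : ℝ) ∧
          ∀ᶠ k : ℕ in atTop, ((M ^ k) 0 1) / ((M ^ k) 1 1) = L := by
  intro L hT
  have hlam0 : lam ≠ 0 := fun h => him (by simp [h])
  have hlam2 : lam ^ 2 = (M.trace : ℂ) * lam - (M.det : ℂ) := by linear_combination hroot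
  -- Cayley–Hamilton
  have hM2 : M * M = M.trace • M - M.det • (1 : Matrix (Fin 2) (Fin 2) ℝ) := by
    ext i j
    fin_cases i <;> fin_cases j <;>
      simp [Matrix.mul_apply, Fin.sum_univ_two, Matrix.trace_fin_two, Matrix.det_fin_two,
        Matrix.one_apply] <;> ring
  by_cases hC : ∃ n : ℕ, 0 < n ∧ (lam ^ n).im = 0
  · -- periodic case: M^n is a scalar matrix
    obtain ⟨n, hn0, hnim⟩ := hC
    have key : ∀ k : ℕ, ∃ p q : ℝ, M ^ k = p • M + q • (1 : Matrix (Fin 2) (Fin 2) ℝ) ∧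
        lam ^ k = (p : ℂ) * lam + (q : ℂ) := by
      intro k
      induction k with
      | zero => exact ⟨0, 1, by simp, by simp⟩
      | succ k ih =>
        obtain ⟨p, q, hMk, hlk⟩ := ih
        refine ⟨M.trace * p + q, -(M.det * p), ?_, ?_⟩
        · rw [pow_succ, hMk, Matrix.add_mul, Matrix.smul_mul, Matrix.smul_mul, Matrix.one_mul,
            hM2]
          ext i j
          simp only [Matrix.add_apply, Matrix.sub_apply, Matrix.smul_apply, Matrix.one_apply,
            smul_eq_mul]
          split_ifs <;> ring
        · rw [pow_succ, hlk]
          push_cast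
          linear_combination (p : ℂ) * hlam2
    obtain ⟨p, q, hMn, hln⟩ := key n
    have hp0 : p = 0 := by
      have h1 : p * lam.im = 0 := by
        have := congrArg Complex.im hln
        rw [hnim] at this
        simpa using this.symm
      rcases mul_eq_zero.mp h1 with h | h
      · exact h
      · exact absurd h him
    have hq0 : q ≠ 0 := by
      intro h
      rw [hp0, h] at hln
      simp at hln
      exact hlam0 hln.1
    rw [hp0] at hMn
    simp only [zero_smul, zero_add] at hMn
    have hper : ∀ k : ℕ, ((M ^ (k + n)) 0 1) / ((M ^ (k + n)) 1 1)
        = ((M ^ k) 0 1) / ((M ^ k) 1 1) := by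
      intro k
      have h1 : M ^ (k + n) = q • (M ^ k) := by
        rw [pow_add, hMn, Matrix.mul_smul, Matrix.mul_one]
      rw [h1]
      simp only [Matrix.smul_apply, smul_eq_mul]
      exact mul_div_mul_left _ _ hq0
    have hconstm : ∀ j m : ℕ, ((M ^ (j + m * n)) 0 1) / ((M ^ (j + m * n)) 1 1)
        = ((M ^ j) 0 1) / ((M ^ j) 1 1) := by
      intro j m
      induction m with
      | zero => simp
      | succ m ih =>
        have he : j + (m + 1) * n = (j + m * n) + n := by ring
        rw [he, hper, ih]
    have hall : ∀ j : ℕ, ((M ^ j) 0 1) / ((M ^ j) 1 1) = L := by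
      intro j
      have htend : Tendsto (fun m : ℕ => ((M ^ (j + m * n)) 0 1) / ((M ^ (j + m * n)) 1 1))
          atTop (nhds L) := by
        refine hT.comp ?_
        refine tendsto_atTop_mono (fun m => ?_) tendsto_id
        have h1 : m ≤ m * n := Nat.le_mul_of_pos_right m hn0
        show m ≤ j + m * n
        omega
      have h2 : Tendsto (fun _ : ℕ => ((M ^ j) 0 1) / ((M ^ j) 1 1)) atTop (nhds L) :=
        htend.congr (fun m => hconstm j m)
      exact tendsto_nhds_unique tendsto_const_nhds h2
    have hL0 : L = 0 := by
      have := hall 0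
      simp [Matrix.one_apply] at this
      exact this.symm
    exact ⟨0, by simp [hL0], Eventually.of_forall (fun k => hall k)⟩
  · -- non-periodic case: derive a contradiction
    push_neg at hC
    exfalso
    -- trace and det in terms of lam
    have hconj : (starRingEnd ℂ) lam ^ 2 - (M.trace : ℂ) * (starRingEnd ℂ) lam
        + (M.det : ℂ) = 0 := by
      have := congrArg (starRingEnd ℂ) hroot
      simpa [map_sub, map_add, _root_.map_mul, map_pow, Complex.conj_ofReal] using this
    have hne : lam - (starRingEnd ℂ) lam ≠ 0 :=
      sub_ne_zero_of_ne (fun h => him (Complex.conj_eq_iff_im.mp h.symm))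
    have h2 : (lam - (starRingEnd ℂ) lam) * ((lam + (starRingEnd ℂ) lam) - (M.trace : ℂ)) = 0 := by
      linear_combination hroot - hconj
    have ht : (M.trace : ℂ) = lam + (starRingEnd ℂ) lam :=
      (sub_eq_zero.mp ((mul_eq_zero.mp h2).resolve_left hne)).symm
    have hd : (M.det : ℂ) = lam * (starRingEnd ℂ) lam := by
      linear_combination hroot + lam * ht
    set R : ℝ := ‖lam‖ with hRdef
    have hR0 : (0 : ℝ) < R := norm_pos_iff.mpr hlam0
    have hdetR : M.det = R ^ 2 := by
      have h3 : (M.det : ℂ) = ((Complex.normSq lam : ℝ) : ℂ) := by rw [hd, Complex.mul_conj]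
      have h4 : M.det = Complex.normSq lam := by exact_mod_cast h3
      rw [h4, ← Complex.sq_norm]
    -- recurrences
    have hstep : ∀ k : ℕ, M ^ (k + 2) = M.trace • M ^ (k + 1) - M.det • M ^ k := by
      intro k
      have h1 : M ^ (k + 2) = M ^ k * (M * M) := by rw [pow_add, pow_two]
      rw [h1, hM2, Matrix.mul_sub, Matrix.mul_smul, Matrix.mul_smul, Matrix.mul_one, ← pow_succ]
    have ha_rec : ∀ k : ℕ,
        (M ^ (k + 2)) 0 1 = M.trace * (M ^ (k + 1)) 0 1 - M.det * (M ^ k) 0 1 := by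
      intro k
      rw [hstep k]
      simp [Matrix.sub_apply, Matrix.smul_apply, smul_eq_mul]
    have hb_rec : ∀ k : ℕ,
        (M ^ (k + 2)) 1 1 = M.trace * (M ^ (k + 1)) 1 1 - M.det * (M ^ k) 1 1 := by
      intro k
      rw [hstep k]
      simp [Matrix.sub_apply, Matrix.smul_apply, smul_eq_mul]
    have ha0 : (M ^ 0) 0 1 = 0 := by simp [Matrix.one_apply]
    have ha1 : (M ^ 1) 0 1 = M 0 1 := by simp
    have hb0 : (M ^ 0) 1 1 = 1 := by simp [Matrix.one_apply]
    have hb1 : (M ^ 1) 1 1 = M 1 1 := by simp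
    -- closed forms
    set A : ℂ := ⟨0, -(M 0 1) / lam.im⟩ with hAdef
    set B : ℂ := ⟨1, (lam.re - M 1 1) / lam.im⟩ with hBdef
    have hA : ∀ k, (M ^ k) 0 1 = (A * lam ^ k).re := by
      refine sol_rec M.trace M.det lam hlam2 _ ha_rec A ?_ ?_
      · rw [ha0]
      · rw [ha1, Complex.mul_re]
        show 0 * lam.re - -(M 0 1) / lam.im * lam.im = M 0 1
        field_simp
        ring
    have hB : ∀ k, (M ^ k) 1 1 = (B * lam ^ k).re := by
      refine sol_rec M.trace M.det lam hlam2 _ hb_rec B ?_ ?_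
      · rw [hb0]
      · rw [hb1, Complex.mul_re]
        show 1 * lam.re - (lam.re - M 1 1) / lam.im * lam.im = M 1 1
        field_simp
        ring
    have hB0 : B ≠ 0 := by
      intro h
      have h1 : B.re = 1 := rfl
      rw [h] at h1
      simp at h1
    -- eventually the denominator is nonzero
    have hb_ev : ∀ᶠ k : ℕ in atTop, (M ^ k) 1 1 ≠ 0 := by
      by_cases hex : ∃ j : ℕ, (M ^ j) 1 1 = 0
      · obtain ⟨j, hj⟩ := hex
        filter_upwards [eventually_gt_atTop j] with k hk hk0
        have hz : B * lam ^ j ≠ 0 := mul_ne_zero hB0 (pow_ne_zero _ hlam0)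
        have h1 : (B * lam ^ j).re = 0 := by rw [← hB j]; exact hj
        have h2' : ((B * lam ^ j) * lam ^ (k - j)).re = 0 := by
          have he : (B * lam ^ j) * lam ^ (k - j) = B * lam ^ k := by
            rw [mul_assoc, ← pow_add]
            congr 2
            omega
          rw [he, ← hB k]
          exact hk0
        exact hC (k - j) (by omega) (re_zero_mul _ _ hz h1 h2')
      · push_neg at hex
        exact Eventually.of_forall hex
    -- wronskian identity
    have hW : ∀ k : ℕ, (M ^ k) 0 1 * (M ^ (k + 1)) 1 1 - (M ^ (k + 1)) 0 1 * (M ^ k) 1 1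
        = -(M 0 1) * (M.det) ^ k := by
      intro k
      induction k with
      | zero => rw [ha0, ha1, hb0, hb1]; ring
      | succ k ih =>
        rw [show k + 1 + 1 = k + 2 from rfl, ha_rec k, hb_rec k]
        have he : (M ^ (k+1)) 0 1 * (M.trace * (M ^ (k+1)) 1 1 - M.det * (M ^ k) 1 1)
            - (M.trace * (M ^ (k+1)) 0 1 - M.det * (M ^ k) 0 1) * (M ^ (k+1)) 1 1
            = M.det * ((M ^ k) 0 1 * (M ^ (k+1)) 1 1 - (M ^ (k+1)) 0 1 * (M ^ k) 1 1) := by ring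
        rw [he, ih]
        ring
    have hWc : ∀ k : ℕ,
        ((M ^ k) 0 1 - L * (M ^ k) 1 1) * (M ^ (k + 1)) 1 1
          - ((M ^ (k + 1)) 0 1 - L * (M ^ (k + 1)) 1 1) * (M ^ k) 1 1
        = -(M 0 1) * (M.det) ^ k := by
      intro k
      linear_combination hW k
    -- normalized sequences
    set cc : ℕ → ℝ := fun k => ((M ^ k) 0 1 - L * (M ^ k) 1 1) / R ^ k with hcc
    set gg : ℕ → ℝ := fun k => (M ^ k) 1 1 / R ^ k with hgg
    have hRk : ∀ k : ℕ, (R : ℝ) ^ k ≠ 0 := fun k => pow_ne_zero _ hR0.ne'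
    have hgbd : ∀ k, |gg k| ≤ ‖B‖ := by
      intro k
      rw [hgg]
      simp only
      rw [abs_div, abs_pow, abs_of_pos hR0, div_le_iff₀ (pow_pos hR0 k)]
      calc |(M ^ k) 1 1| = |(B * lam ^ k).re| := by rw [hB k]
        _ ≤ ‖B * lam ^ k‖ := Complex.abs_re_le_norm _
        _ = ‖B‖ * R ^ k := by rw [norm_mul, norm_pow]
    have hkey : ∀ k : ℕ, cc k * gg (k + 1) - cc (k + 1) * gg k = -(M 0 1) / R := by
      intro k
      have e1 : cc k * gg (k + 1) - cc (k + 1) * gg k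
          = (((M ^ k) 0 1 - L * (M ^ k) 1 1) * (M ^ (k + 1)) 1 1
              - ((M ^ (k + 1)) 0 1 - L * (M ^ (k + 1)) 1 1) * (M ^ k) 1 1)
            / (R ^ k * R ^ (k + 1)) := by
        rw [hcc, hgg]
        simp only
        field_simp
      rw [e1, hWc k, hdetR, ← pow_mul]
      rw [div_eq_div_iff (by positivity) hR0.ne']
      ring
    -- limits
    have hT' : Tendsto (fun k : ℕ => (M ^ k) 0 1 / (M ^ k) 1 1 - L) atTop (nhds 0) := by
      simpa using hT.sub_const L
    have hcc0 : Tendsto cc atTop (nhds 0) := by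
      have hub : ∀ᶠ k : ℕ in atTop,
          ‖cc k‖ ≤ |(M ^ k) 0 1 / (M ^ k) 1 1 - L| * ‖B‖ := by
        filter_upwards [hb_ev] with k hk
        have he : cc k = ((M ^ k) 0 1 / (M ^ k) 1 1 - L) * gg k := by
          rw [hcc, hgg]
          simp only
          field_simp
        rw [he, Real.norm_eq_abs, abs_mul]
        exact mul_le_mul_of_nonneg_left (hgbd k) (abs_nonneg _)
      have hlb : Tendsto (fun k : ℕ => |(M ^ k) 0 1 / (M ^ k) 1 1 - L| * ‖B‖)
          atTop (nhds 0) := by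
        simpa using hT'.abs.mul_const (‖B‖)
      exact squeeze_zero_norm' hub hlb
    have hcc1 : Tendsto (fun k : ℕ => cc (k + 1)) atTop (nhds 0) :=
      hcc0.comp (tendsto_add_atTop_nat 1)
    have hbound : Tendsto
        (fun k : ℕ => |cc k| * ‖B‖ + |cc (k + 1)| * ‖B‖) atTop (nhds 0) := by
      simpa using (hcc0.abs.mul_const (‖B‖)).add (hcc1.abs.mul_const (‖B‖))
    have hzero : Tendsto (fun k : ℕ => cc k * gg (k + 1) - cc (k + 1) * gg k) atTop (nhds 0) := by
      refine squeeze_zero_norm (fun k => ?_) hbound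
      rw [Real.norm_eq_abs]
      calc |cc k * gg (k + 1) - cc (k + 1) * gg k|
          ≤ |cc k * gg (k + 1)| + |cc (k + 1) * gg k| := abs_sub _ _
        _ = |cc k| * |gg (k + 1)| + |cc (k + 1)| * |gg k| := by rw [abs_mul, abs_mul]
        _ ≤ |cc k| * ‖B‖ + |cc (k + 1)| * ‖B‖ :=
            add_le_add (mul_le_mul_of_nonneg_left (hgbd (k + 1)) (abs_nonneg _))
              (mul_le_mul_of_nonneg_left (hgbd k) (abs_nonneg _))
    have hconst : Tendsto (fun _ : ℕ => -(M 0 1) / R) atTop (nhds 0) :=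
      hzero.congr (fun k => hkey k)
    have hM01 : M 0 1 = 0 := by
      have h5 : -(M 0 1) / R = 0 := (tendsto_nhds_unique hconst tendsto_const_nhds).symm
      rcases div_eq_zero_iff.mp h5 with h | h
      · linarith [neg_eq_zero.mp h]
      · exact absurd h hR0.ne'
    -- contradiction: lam would be real
    have htr2 : (M.trace : ℂ) = ((M 0 0 : ℝ) : ℂ) + ((M 1 1 : ℝ) : ℂ) := by
      rw [Matrix.trace_fin_two]; push_cast; ring
    have hdt2 : (M.det : ℂ) = ((M 0 0 : ℝ) : ℂ) * ((M 1 1 : ℝ) : ℂ) := by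
      rw [Matrix.det_fin_two, hM01]; push_cast; ring
    have hfac : (lam - ((M 0 0 : ℝ) : ℂ)) * (lam - ((M 1 1 : ℝ) : ℂ)) = 0 := by
      linear_combination hroot + lam * htr2 - hdt2
    rcases mul_eq_zero.mp hfac with h | h
    · exact him (by rw [sub_eq_zero.mp h]; simp)
    · exact him (by rw [sub_eq_zero.mp h]; simp)
end
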